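/- (Koma–Tasaki lemma, first part.) Let ρ be a density matrix, O⁺ = Q + R matrices, O⁻ := (O⁺)†, and reals o > 0, 0 < μ ≤ 1, N > 0, a ≥ 1 and a natural number M. Assume: ‖O⁺‖ ≤ o·N; ‖R‖ ≤ o·a; ‖[O⁺, O⁻]‖ ≤ 4·o²·N; ‖[Q, Q†]‖ ≤ 4·o²·N; the fluctuation bound tr(ρ·(O⁺·O⁻ + O⁻·O⁺)) ≥ 4·(μ·o·N)²; N ≥ 16·a²/μ²; and M ≤ μ²·N/(16·a). Define a_m := tr(Q^m · ρ · (Q†)^m) (a nonnegative real, with a_0 = 1). Then for every m with 1 ≤ m ≤ M one has a_{m−1} > 0 and a_m ≥ (μ·o·N)² · a_{m−1}; consequently a_{m−k} ≤ (μ·o·N)^{−2k} · a_m for all k ≤ m ≤ M. -/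

import Mathlib

open Matrix
open scoped ComplexOrder Matrix.Norms.L2Operator

/-- `a_m = tr(Q^m · ρ · (Q†)^m)`, a nonnegative real number. -/
noncomputable def ktA {n : Type*} [Fintype n] [DecidableEq n]
    (ρ Q : Matrix n n ℂ) (m : ℕ) : ℝ :=
  ((Q ^ m * ρ * Qᴴ ^ m).trace).re

set_option linter.unusedSectionVars false
set_option linter.unusedVariables false
set_option linter.deprecated false

namespace KTaux

variable {n : Type*} [Fintype n] [DecidableEq n]

variable {n : Type*} [Fintype n] [DecidableEq n]

noncomputable def mvec (U : Matrix n n ℂ) : EuclideanSpace ℂ (n × n) :=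
  (EuclideanSpace.equiv (n × n) ℂ).symm fun p => U p.1 p.2

lemma mvec_apply (U : Matrix n n ℂ) (p : n × n) : mvec U p = U p.1 p.2 := rfl

lemma mvec_sub (U V : Matrix n n ℂ) : mvec (U - V) = mvec U - mvec V := by
  ext p; simp [mvec_apply]

lemma inner_mvec (U V : Matrix n n ℂ) :
    (inner ℂ (mvec U) (mvec V) : ℂ) = (Uᴴ * V).trace := by
  simp only [PiLp.inner_apply, mvec_apply, RCLike.inner_apply, Matrix.trace,
    Matrix.diag, Matrix.mul_apply, Matrix.conjTranspose_apply, Fintype.sum_prod_type]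
  rw [Finset.sum_comm]
  simp [RCLike.star_def]
  exact Finset.sum_congr rfl fun _ _ => Finset.sum_congr rfl fun _ _ => mul_comm _ _

lemma norm_mvec_sq (U : Matrix n n ℂ) : ‖mvec U‖ ^ 2 = ((Uᴴ * U).trace).re := by
  have h := inner_mvec U U
  rw [inner_self_eq_norm_sq_to_K] at h
  rw [← h]; norm_cast

noncomputable def cvec (U : Matrix n n ℂ) (j : n) : EuclideanSpace ℂ n :=
  (EuclideanSpace.equiv n ℂ).symm fun i => U i j

lemma norm_mvec_sq_eq_sum (U : Matrix n n ℂ) :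
    ‖mvec U‖ ^ 2 = ∑ j, ‖cvec U j‖ ^ 2 := by
  have h1 : ‖mvec U‖ ^ 2 = ∑ p : n × n, ‖U p.1 p.2‖ ^ 2 := by
    rw [EuclideanSpace.norm_eq, Real.sq_sqrt (by positivity)]
    rfl
  have h2 : ∀ j, ‖cvec U j‖ ^ 2 = ∑ i, ‖U i j‖ ^ 2 := by
    intro j
    rw [EuclideanSpace.norm_eq, Real.sq_sqrt (by positivity)]
    rfl
  rw [h1]
  simp only [h2]
  rw [Fintype.sum_prod_type]
  exact Finset.sum_comm
lemma norm_mvec_mul_le (X U : Matrix n n ℂ) :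
    ‖mvec (X * U)‖ ≤ ‖X‖ * ‖mvec U‖ := by
  have hsq : ‖mvec (X * U)‖ ^ 2 ≤ (‖X‖ * ‖mvec U‖) ^ 2 := by
    rw [norm_mvec_sq_eq_sum, mul_pow, norm_mvec_sq_eq_sum, Finset.mul_sum]
    apply Finset.sum_le_sum
    intro j _
    have hc : cvec (X * U) j = (EuclideanSpace.equiv n ℂ).symm (X *ᵥ (cvec U j)) := by
      ext i
      simp [cvec, Matrix.mulVec, Matrix.mul_apply, dotProduct]
    rw [hc]
    have := Matrix.l2_opNorm_mulVec X (cvec U j)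
    have h0 : (0:ℝ) ≤ ‖X‖ * ‖cvec U j‖ := by positivity
    nlinarith only [this, h0, norm_nonneg ((EuclideanSpace.equiv n ℂ).symm (X *ᵥ (cvec U j)))]
  nlinarith only [hsq, norm_nonneg (mvec (X * U)), mul_nonneg (norm_nonneg X) (norm_nonneg (mvec U))]

lemma trace_sigma (C X : Matrix n n ℂ) :
    ((Cᴴ * C) * X).trace = (inner ℂ (mvec Cᴴ) (mvec (X * Cᴴ)) : ℂ) := by
  rw [inner_mvec, conjTranspose_conjTranspose, ← Matrix.mul_assoc, Matrix.trace_mul_cycle]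
  rw [Matrix.trace_mul_comm]
  simp [Matrix.mul_assoc]

lemma trace_sigma2 (C X Y : Matrix n n ℂ) :
    ((Cᴴ * C) * Xᴴ * Y).trace = (inner ℂ (mvec (X * Cᴴ)) (mvec (Y * Cᴴ)) : ℂ) := by
  rw [inner_mvec, conjTranspose_mul, conjTranspose_conjTranspose]
  rw [show (C * Xᴴ) * (Y * Cᴴ) = (C * (Xᴴ * Y)) * Cᴴ by simp [Matrix.mul_assoc]]
  rw [Matrix.trace_mul_comm]
  simp only [Matrix.mul_assoc]
  rw [Matrix.trace_mul_comm]
  conv_rhs => rw [show C * (Xᴴ * (Y * Cᴴ)) = (C * (Xᴴ * Y)) * Cᴴ by simp [Matrix.mul_assoc],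
    Matrix.trace_mul_comm]
  simp [Matrix.mul_assoc]

lemma qn_eq (C X : Matrix n n ℂ) :
    (((Cᴴ * C) * Xᴴ * X).trace).re = ‖mvec (X * Cᴴ)‖ ^ 2 := by
  rw [trace_sigma2, inner_self_eq_norm_sq_to_K]
  norm_cast


lemma KT_key_real (u κ lam β γ P q v w h2 : ℝ)
    (hu : 0 < u) (hκ0 : 0 ≤ κ) (hlam0 : 0 ≤ lam) (hβ0 : 0 ≤ β)
    (hκ : κ ≤ u^2/16) (hlam : lam ≤ u^2/16) (hβ : β ≤ u/16)
    (hβ2 : β^2 ≤ lam/16) (hβu : β*u ≤ lam)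
    (hγl : 289/256*u^2 ≤ γ) (hγh : γ ≤ 15/8*u^2)
    (hq0 : 0 ≤ q) (hv0 : 0 ≤ v) (hw0 : 0 ≤ w) (hP0 : 0 ≤ P)
    (hPγ : γ ≤ P^2)
    (hqlow : P - β ≤ q) (hqhigh : q ≤ P + β)
    (hv : w - lam ≤ v)
    (hw : h2 - 4*κ*P^2 ≤ w^2) (hh2 : P^4 ≤ h2) :
    u^2 ≤ q^2 ∧ (γ - (9/2*κ + 5*lam)) * q^2 ≤ v^2 := by
  have hγ0 : 0 ≤ γ := le_trans (by positivity) hγl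
  have hsγ0 : 0 ≤ Real.sqrt γ := Real.sqrt_nonneg _
  set sγ := Real.sqrt γ with hsγdef
  have hsγ2 : sγ^2 = γ := Real.sq_sqrt hγ0
  have hsγl : 17/16*u ≤ sγ := by
    rw [hsγdef]
    calc 17/16*u = Real.sqrt ((17/16*u)^2) := (Real.sqrt_sq (by positivity)).symm
    _ ≤ Real.sqrt γ := Real.sqrt_le_sqrt (by linarith only [hγl])
  have hsγh : sγ ≤ 11/8*u := by
    rw [hsγdef]
    calc Real.sqrt γ ≤ Real.sqrt ((11/8*u)^2) := Real.sqrt_le_sqrt (by linarith only [hγh, sq_nonneg u])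
    _ = 11/8*u := Real.sqrt_sq (by positivity)
  have hPs : sγ ≤ P := by
    rw [hsγdef]
    calc Real.sqrt γ ≤ Real.sqrt (P^2) := Real.sqrt_le_sqrt hPγ
    _ = P := Real.sqrt_sq hP0
  have hqu : u ≤ q := by linarith only [hqlow, hPs, hsγl, hβ]
  refine ⟨pow_le_pow_left₀ hu.le hqu 2, ?_⟩
  have hwP : P^2 - 9/4*κ ≤ w := by
    rcases le_or_gt (P^2 - 9/4*κ) 0 with h | h
    · linarith only [h, hw0]
    · have hκP : κ*(289/16*κ) ≤ κ*P^2 :=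
        mul_le_mul_of_nonneg_left (by linarith only [hκ, hγl, hPγ]) hκ0
      have hsq : (P^2 - 9/4*κ)^2 ≤ w^2 := by linarith only [hw, hh2, hκP, sq_nonneg κ]
      nlinarith only [hsq, h, hw0]
  have hvP : P^2 - (9/4*κ + lam) ≤ v := by linarith only [hwP, hv]
  have hc0 : 0 ≤ P^2 - (9/4*κ + lam) := by linarith only [hγl, hPγ, hκ, hlam, sq_nonneg u]
  have hD0 : 0 ≤ γ - (9/2*κ + 5*lam) := by linarith only [hγl, hκ, hlam, sq_nonneg u]
  have hβsγ : β ≤ sγ := by linarith only [hβ, hsγl, hu]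
  -- base inequality at P = sγ
  have hh1 : β*sγ ≤ β*(11/8*u) := mul_le_mul_of_nonneg_left hsγh hβ0
  have h1 : 2*β*sγ + β^2 ≤ 3*lam := by linarith only [hh1, hβu, hβ2, hlam0]
  have he0 : 0 ≤ 2*β*sγ + β^2 := by positivity
  have hA : sγ^2*(2*β*sγ+β^2) ≤ sγ^2*(3*lam) := mul_le_mul_of_nonneg_left h1 (sq_nonneg sγ)
  have hB : (sγ^2-(9/2*κ + 5*lam))*(2*β*sγ+β^2) ≤ sγ^2*(2*β*sγ+β^2) :=
    mul_le_mul_of_nonneg_right (by linarith only [hκ0, hlam0]) he0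
  have hA1 : (sγ^2-(9/2*κ + 5*lam)) * (sγ+β)^2 ≤ (sγ^2-(9/4*κ + lam))^2 := by
    nlinarith only [hA, hB, sq_nonneg (9/4*κ+lam)]
  -- increment
  have ht0 : 0 ≤ P - sγ := by linarith only [hPs]
  have hγβ : sγ^2*β ≤ sγ^2*sγ := mul_le_mul_of_nonneg_left hβsγ (sq_nonneg sγ)
  have hγt : 0 ≤ sγ^2*(P-sγ) := mul_nonneg (sq_nonneg sγ) ht0
  have hls : 0 ≤ lam*sγ := mul_nonneg hlam0 hsγ0
  have hlt : 0 ≤ lam*(P-sγ) := mul_nonneg hlam0 ht0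
  have hκs : 0 ≤ κ*sγ := mul_nonneg hκ0 hsγ0
  have hκt : 0 ≤ κ*(P-sγ) := mul_nonneg hκ0 ht0
  have hDβ : 0 ≤ (9/2*κ + 5*lam)*β := by positivity
  have hA2 : (sγ^2-(9/2*κ + 5*lam))*(2*(sγ+β)+(P-sγ)) ≤
      2*(sγ^2-(9/4*κ + lam))*(2*sγ+(P-sγ)) := by
    nlinarith only [hγβ, hγt, hls, hlt, hκs, hκt, hDβ]
  have hA3 : (sγ^2-(9/2*κ + 5*lam))*(2*(sγ+β)*(P-sγ) + (P-sγ)^2) ≤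
      2*(sγ^2-(9/4*κ + lam))*((P-sγ)*(2*sγ+(P-sγ))) := by
    have hh := mul_le_mul_of_nonneg_left hA2 ht0
    nlinarith only [hh]
  have hA4 : (sγ^2-(9/2*κ + 5*lam)) * (P+β)^2 ≤ (P^2-(9/4*κ + lam))^2 := by
    nlinarith only [hA1, hA3, sq_nonneg ((P-sγ)*(P+sγ))]
  have hcore : (γ-(9/2*κ + 5*lam)) * (P+β)^2 ≤ (P^2-(9/4*κ + lam))^2 := by
    rw [← hsγ2]; exact hA4
  have hq2 : (γ - (9/2*κ + 5*lam)) * q^2 ≤ (γ - (9/2*κ + 5*lam)) * (P+β)^2 :=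
    mul_le_mul_of_nonneg_left (pow_le_pow_left₀ hq0 hqhigh 2) hD0
  have hv2 : (P^2 - (9/4*κ + lam))^2 ≤ v^2 := pow_le_pow_left₀ hc0 hvP 2
  exact le_trans hq2 (le_trans hcore hv2)

set_option maxHeartbeats 1600000 in
lemma step_main (σ : Matrix n n ℂ) (hσ : σ.PosSemidef)
    (Op Q R : Matrix n n ℂ) (hQ : Q = Op - R)
    (u κ β oN γ : ℝ)
    (hu : 0 < u) (hκ0 : 0 ≤ κ) (hβ0 : 0 ≤ β) (hoN : 0 ≤ oN)
    (hκ : κ ≤ u^2/16) (hlam : oN*β ≤ u^2/16) (hβ : β ≤ u/16)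
    (hβ2 : β^2 ≤ (oN*β)/16) (hβu : β*u ≤ oN*β)
    (hγl : 289/256*u^2 ≤ γ) (hγh : γ ≤ 15/8*u^2)
    (hOpn : ‖Op‖ ≤ oN) (hRn : ‖R‖ ≤ β)
    (hcomm : ‖Op * Opᴴ - Opᴴ * Op‖ ≤ 4*κ)
    (hA : 0 < (σ.trace).re)
    (hg : γ * (σ.trace).re ≤ ((σ * Opᴴ * Op).trace).re) :
    u^2 * (σ.trace).re ≤ ((σ * Qᴴ * Q).trace).re ∧
      (γ - (9/2*κ + 5*(oN*β))) * ((σ * Qᴴ * Q).trace).re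
        ≤ ((σ * (Op*Q)ᴴ * (Op*Q)).trace).re := by
  obtain ⟨C, rfl⟩ : ∃ C : Matrix n n ℂ, σ = Cᴴ * C := by
    open scoped MatrixOrder in exact CStarAlgebra.nonneg_iff_eq_star_mul_self.mp hσ.nonneg
  set s := ‖mvec (Cᴴ)‖ with hsdef
  have hs2 : s^2 = (((Cᴴ*C)).trace).re := by
    rw [hsdef, norm_mvec_sq, conjTranspose_conjTranspose, Matrix.trace_mul_comm]
  have hs0 : 0 < s := by
    have h1 : 0 < s^2 := by rw [hs2]; exact hA
    nlinarith only [h1, norm_nonneg (mvec (Cᴴ))]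
  have hqnQ := qn_eq C Q
  have hqnOp := qn_eq C Op
  have hqnOpQ := qn_eq C (Op*Q)
  have hmQ : mvec (Q*Cᴴ) = mvec (Op*Cᴴ) - mvec (R*Cᴴ) := by
    rw [hQ, Matrix.sub_mul, mvec_sub]
  have hnR : ‖mvec (R*Cᴴ)‖ ≤ β * s :=
    le_trans (norm_mvec_mul_le R Cᴴ) (mul_le_mul_of_nonneg_right hRn (norm_nonneg _))
  have htri1 : ‖mvec (Op*Cᴴ)‖ - β*s ≤ ‖mvec (Q*Cᴴ)‖ := by
    rw [hmQ]
    have := norm_sub_norm_le (mvec (Op*Cᴴ)) (mvec (R*Cᴴ))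
    linarith
  have htri2 : ‖mvec (Q*Cᴴ)‖ ≤ ‖mvec (Op*Cᴴ)‖ + β*s := by
    rw [hmQ]
    have := norm_sub_le (mvec (Op*Cᴴ)) (mvec (R*Cᴴ))
    linarith
  have hmOpQ : mvec ((Op*Q)*Cᴴ) = mvec ((Op*Op)*Cᴴ) - mvec ((Op*R)*Cᴴ) := by
    rw [hQ, Matrix.mul_sub, Matrix.sub_mul, mvec_sub]
  have hnOpR : ‖mvec ((Op*R)*Cᴴ)‖ ≤ oN*(β*s) := by
    rw [Matrix.mul_assoc]
    refine le_trans (norm_mvec_mul_le Op (R*Cᴴ)) ?_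
    exact mul_le_mul hOpn hnR (norm_nonneg _) hoN
  have htriv : ‖mvec ((Op*Op)*Cᴴ)‖ - oN*(β*s) ≤ ‖mvec ((Op*Q)*Cᴴ)‖ := by
    rw [hmOpQ]
    have := norm_sub_norm_le (mvec ((Op*Op)*Cᴴ)) (mvec ((Op*R)*Cᴴ))
    linarith
  -- commutator swap identity
  have hid : (Cᴴ*C) * (Op*Op)ᴴ * (Op*Op)
      = (Cᴴ*C) * (Opᴴ*Op)ᴴ * (Opᴴ*Op) - (Cᴴ*C) * Opᴴ * ((Op*Opᴴ - Opᴴ*Op)*Op) := by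
    simp only [Matrix.conjTranspose_mul, Matrix.conjTranspose_conjTranspose,
      Matrix.mul_sub, Matrix.sub_mul, Matrix.mul_assoc]
    abel
  have htr : (((Cᴴ*C) * (Op*Op)ᴴ * (Op*Op)).trace).re
      = (((Cᴴ*C) * (Opᴴ*Op)ᴴ * (Opᴴ*Op)).trace).re
        - (((Cᴴ*C) * Opᴴ * ((Op*Opᴴ - Opᴴ*Op)*Op)).trace).re := by
    rw [hid]
    simp [Matrix.trace_sub, Complex.sub_re]
  have herr : |(((Cᴴ*C) * Opᴴ * ((Op*Opᴴ - Opᴴ*Op)*Op)).trace).re|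
      ≤ 4*κ * ‖mvec (Op*Cᴴ)‖^2 := by
    rw [trace_sigma2]
    refine le_trans (Complex.abs_re_le_norm _) ?_
    refine le_trans (norm_inner_le_norm (𝕜 := ℂ) _ _) ?_
    have h1 : ‖mvec (((Op*Opᴴ - Opᴴ*Op)*Op)*Cᴴ)‖ ≤ (4*κ) * ‖mvec (Op*Cᴴ)‖ := by
      rw [Matrix.mul_assoc]
      refine le_trans (norm_mvec_mul_le _ _) ?_
      exact mul_le_mul_of_nonneg_right hcomm (norm_nonneg _)
    have h0 := norm_nonneg (mvec (Op*Cᴴ))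
    nlinarith only [h1, h0, norm_nonneg (mvec (((Op*Opᴴ - Opᴴ*Op)*Op)*Cᴴ))]
  have hw2 : ‖mvec ((Opᴴ*Op)*Cᴴ)‖^2 - 4*κ*‖mvec (Op*Cᴴ)‖^2 ≤ ‖mvec ((Op*Op)*Cᴴ)‖^2 := by
    have e1 := qn_eq C (Op*Op)
    have e2 := qn_eq C (Opᴴ*Op)
    have habs := abs_le.mp herr
    rw [← e1, htr, ← e2]
    linarith [habs.1]
  have hcs : (‖mvec (Op*Cᴴ)‖^2)^2 ≤ (‖mvec ((Opᴴ*Op)*Cᴴ)‖ * s)^2 := by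
    have h0 := trace_sigma2 C 1 (Opᴴ*Op)
    have h1 : ((Cᴴ*C) * (1:Matrix n n ℂ)ᴴ * (Opᴴ*Op)).trace = ((Cᴴ*C) * Opᴴ * Op).trace := by
      simp [Matrix.mul_assoc]
    have h1C : mvec ((1:Matrix n n ℂ)*Cᴴ) = mvec Cᴴ := by rw [Matrix.one_mul]
    have h2 : ‖mvec (Op*Cᴴ)‖^2 ≤ s * ‖mvec ((Opᴴ*Op)*Cᴴ)‖ := by
      rw [← hqnOp, ← h1, h0, h1C]
      refine le_trans (Complex.re_le_norm _) ?_
      exact norm_inner_le_norm (𝕜 := ℂ) _ _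
    have h3 : (0:ℝ) ≤ ‖mvec (Op*Cᴴ)‖^2 := sq_nonneg _
    calc (‖mvec (Op*Cᴴ)‖^2)^2 ≤ (s * ‖mvec ((Opᴴ*Op)*Cᴴ)‖)^2 := pow_le_pow_left₀ h3 h2 2
    _ = (‖mvec ((Opᴴ*Op)*Cᴴ)‖ * s)^2 := by ring
  -- apply the real lemma with normalized quantities
  have hs2pos : (0:ℝ) < s^2 := by positivity
  obtain ⟨c1, c2⟩ := KT_key_real u κ (oN*β) β γ
      (‖mvec (Op*Cᴴ)‖/s) (‖mvec (Q*Cᴴ)‖/s) (‖mvec ((Op*Q)*Cᴴ)‖/s)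
      (‖mvec ((Op*Op)*Cᴴ)‖/s) ((‖mvec ((Opᴴ*Op)*Cᴴ)‖/s)^2)
      hu hκ0 (by positivity) hβ0 hκ hlam hβ hβ2 hβu hγl hγh
      (by positivity) (by positivity) (by positivity) (by positivity)
      (by -- hPγ
        rw [div_pow, le_div_iff₀ hs2pos]
        rw [← hs2, hqnOp] at hg
        exact hg)
      (by -- hqlow
        rw [show ‖mvec (Op*Cᴴ)‖/s - β = (‖mvec (Op*Cᴴ)‖ - β*s)/s by field_simp; try ring]
        exact (div_le_div_iff_of_pos_right hs0).mpr htri1)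
      (by -- hqhigh
        rw [show ‖mvec (Op*Cᴴ)‖/s + β = (‖mvec (Op*Cᴴ)‖ + β*s)/s by field_simp; try ring]
        exact (div_le_div_iff_of_pos_right hs0).mpr htri2)
      (by -- hv
        rw [show ‖mvec ((Op*Op)*Cᴴ)‖/s - oN*β = (‖mvec ((Op*Op)*Cᴴ)‖ - oN*(β*s))/s by
          field_simp; try ring]
        exact (div_le_div_iff_of_pos_right hs0).mpr htriv)
      (by -- hw
        rw [show (‖mvec ((Opᴴ*Op)*Cᴴ)‖/s)^2 - 4*κ*(‖mvec (Op*Cᴴ)‖/s)^2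
            = (‖mvec ((Opᴴ*Op)*Cᴴ)‖^2 - 4*κ*‖mvec (Op*Cᴴ)‖^2)/s^2 by field_simp; try ring,
          show (‖mvec ((Op*Op)*Cᴴ)‖/s)^2 = ‖mvec ((Op*Op)*Cᴴ)‖^2/s^2 by rw [div_pow]]
        exact (div_le_div_iff_of_pos_right hs2pos).mpr hw2)
      (by -- hh2
        rw [show (‖mvec (Op*Cᴴ)‖/s)^4 = (‖mvec (Op*Cᴴ)‖^2)^2/(s^2)^2 by field_simp,
          show (‖mvec ((Opᴴ*Op)*Cᴴ)‖/s)^2 = (‖mvec ((Opᴴ*Op)*Cᴴ)‖*s)^2/(s^2)^2 by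
            field_simp]
        exact (div_le_div_iff_of_pos_right (by positivity)).mpr hcs)
  constructor
  · rw [← hs2, hqnQ]
    rw [div_pow] at c1
    exact (le_div_iff₀ hs2pos).mp c1
  · rw [hqnQ, hqnOpQ]
    rw [div_pow, div_pow, ← mul_div_assoc] at c2
    exact (div_le_div_iff_of_pos_right hs2pos).mp c2

lemma abs_re_trace_mul_le (σ : Matrix n n ℂ) (hσ : σ.PosSemidef) (X : Matrix n n ℂ) :
    |((σ * X).trace).re| ≤ ‖X‖ * (σ.trace).re := by
  obtain ⟨C, rfl⟩ : ∃ C : Matrix n n ℂ, σ = Cᴴ * C := by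
    open scoped MatrixOrder in exact CStarAlgebra.nonneg_iff_eq_star_mul_self.mp hσ.nonneg
  rw [trace_sigma]
  have h1 := norm_inner_le_norm (𝕜 := ℂ) (mvec Cᴴ) (mvec (X*Cᴴ))
  have h2 : ‖mvec (X*Cᴴ)‖ ≤ ‖X‖*‖mvec Cᴴ‖ := norm_mvec_mul_le X Cᴴ
  have h3 : ‖mvec Cᴴ‖^2 = ((Cᴴ*C).trace).re := by
    rw [norm_mvec_sq, conjTranspose_conjTranspose, Matrix.trace_mul_comm]
  refine le_trans (Complex.abs_re_le_norm _) ?_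
  refine le_trans h1 ?_
  rw [← h3]
  nlinarith only [h2, norm_nonneg (mvec Cᴴ), norm_nonneg X]

end KTaux

set_option maxHeartbeats 1600000 in
/-- Koma–Tasaki lemma, first part: under extensive fluctuations of a raising order
parameter `O⁺ = Q + R`, the quantities `a_m = tr(Q^m ρ (Q†)^m)` satisfy
`a_{m-1} > 0` and `a_m ≥ (μoN)² a_{m-1}` for `1 ≤ m ≤ M`, hence
`a_{m-k} ≤ (μoN)^{-2k} a_m` for all `k ≤ m ≤ M`. -/
theorem koma_tasaki_lemma_first_part
    {n : Type*} [Fintype n] [DecidableEq n] [Nonempty n]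
    (ρ : Matrix n n ℂ) (hρ : ρ.PosSemidef) (hρtr : ρ.trace = 1)
    (Op Q R : Matrix n n ℂ) (hOp : Op = Q + R)
    (o μ N a : ℝ) (M : ℕ)
    (ho : 0 < o) (hμ0 : 0 < μ) (hμ1 : μ ≤ 1) (hN : 0 < N) (ha : 1 ≤ a)
    (hOpn : ‖Op‖ ≤ o * N)
    (hRn : ‖R‖ ≤ o * a)
    (hcommOp : ‖Op * Opᴴ - Opᴴ * Op‖ ≤ 4 * o ^ 2 * N)
    (hcommQ : ‖Q * Qᴴ - Qᴴ * Q‖ ≤ 4 * o ^ 2 * N)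
    (hfluc : 4 * (μ * o * N) ^ 2 ≤ ((ρ * (Op * Opᴴ + Opᴴ * Op)).trace).re)
    (hNa : 16 * a ^ 2 / μ ^ 2 ≤ N)
    (hM : (M : ℝ) ≤ μ ^ 2 * N / (16 * a)) :
    (∀ m : ℕ, 1 ≤ m → m ≤ M →
        0 < ktA ρ Q (m - 1) ∧ (μ * o * N) ^ 2 * ktA ρ Q (m - 1) ≤ ktA ρ Q m) ∧
    (∀ k m : ℕ, k ≤ m → m ≤ M →
        ktA ρ Q (m - k) ≤ ((μ * o * N) ^ (2 * k))⁻¹ * ktA ρ Q m) := by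
  have ha0 : (0:ℝ) < a := lt_of_lt_of_le one_pos ha
  have hu : (0:ℝ) < μ*o*N := by positivity
  -- numeric facts
  have hμN : 16*a^2 ≤ μ^2*N := by
    rw [div_le_iff₀ (by positivity)] at hNa
    nlinarith only [hNa]
  have h16 : (16:ℝ) ≤ μ^2*N := by nlinarith only [hμN, ha, ha0]
  have h16a : 16*a ≤ μ^2*N := by nlinarith only [hμN, ha, ha0]
  have hμ2 : μ^2 ≤ 1 := by nlinarith only [hμ1, hμ0]
  have h16aN : 16*a ≤ N := by nlinarith only [h16a, hμ2, hN]
  have hκu : o^2*N ≤ (μ*o*N)^2/16 := by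
    have h := mul_nonneg (mul_nonneg (sq_nonneg o) hN.le) (by linarith : (0:ℝ) ≤ μ^2*N - 16)
    nlinarith only [h]
  have hlamu : (o*N)*(o*a) ≤ (μ*o*N)^2/16 := by
    have h := mul_nonneg (mul_nonneg (sq_nonneg o) hN.le) (by linarith : (0:ℝ) ≤ μ^2*N - 16*a)
    nlinarith only [h]
  have hμNN : 16*a ≤ μ*N := by
    have h := mul_nonneg (mul_nonneg hμ0.le hN.le) (by linarith : (0:ℝ) ≤ 1 - μ)
    nlinarith only [h, h16a]
  have hβu2 : o*a ≤ (μ*o*N)/16 := by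
    have h := mul_nonneg ho.le (by linarith : (0:ℝ) ≤ μ*N - 16*a)
    nlinarith only [h]
  have hβ2 : (o*a)^2 ≤ ((o*N)*(o*a))/16 := by
    have h := mul_nonneg (mul_nonneg (sq_nonneg o) ha0.le) (by linarith : (0:ℝ) ≤ N - 16*a)
    nlinarith only [h]
  have hβuu : (o*a)*(μ*o*N) ≤ (o*N)*(o*a) := by
    have h := mul_nonneg (mul_nonneg (mul_nonneg (sq_nonneg o) ha0.le) hN.le)
      (by linarith : (0:ℝ) ≤ 1 - μ)
    nlinarith only [h]
  obtain ⟨D, hD⟩ : ∃ D : ℝ, D = 9/2*(o^2*N) + 5*((o*N)*(o*a)) := ⟨_, rfl⟩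
  have hD0 : 0 ≤ D := by rw [hD]; positivity
  have hM16 : (M:ℝ)*(16*a) ≤ μ^2*N := by
    rw [le_div_iff₀ (by positivity)] at hM
    linarith [hM]
  have hMD : (M:ℝ)*D ≤ 19/32*(μ*o*N)^2 := by
    have p1 := mul_le_mul_of_nonneg_right hM16 (mul_nonneg (sq_nonneg o) hN.le)
    have p2 := mul_nonneg (mul_nonneg (by linarith : (0:ℝ) ≤ a - 1) (Nat.cast_nonneg M))
      (mul_nonneg (sq_nonneg o) hN.le)
    rw [hD]
    nlinarith only [p1, p2]
  obtain ⟨γm, hγm⟩ : ∃ γm : ℕ → ℝ, ∀ m : ℕ, γm m = 15/8*(μ*o*N)^2 - m*D :=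
    ⟨_, fun _ => rfl⟩
  have hγl : ∀ m : ℕ, m ≤ M → 289/256*(μ*o*N)^2 ≤ γm m := by
    intro m hm
    have h1 : (m:ℝ)*D ≤ (M:ℝ)*D :=
      mul_le_mul_of_nonneg_right (Nat.cast_le.mpr hm) hD0
    have h2 := sq_nonneg (μ*o*N)
    rw [hγm]
    linarith [hMD]
  have hγh : ∀ m : ℕ, γm m ≤ 15/8*(μ*o*N)^2 := by
    intro m
    have h2 : 0 ≤ (m:ℝ)*D := mul_nonneg (Nat.cast_nonneg m) hD0
    rw [hγm]
    linarith
  -- matrix side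
  have hpsd : ∀ m : ℕ, (Q^m * ρ * Qᴴ^m).PosSemidef := by
    intro m
    have h := hρ.mul_mul_conjTranspose_same (Q^m)
    rwa [Matrix.conjTranspose_pow] at h
  obtain ⟨g, hgdef⟩ : ∃ g : ℕ → ℝ, ∀ m : ℕ, g m = ((Q^m * ρ * Qᴴ^m * Opᴴ * Op).trace).re :=
    ⟨_, fun _ => rfl⟩
  have hktA : ∀ m : ℕ, ktA ρ Q m = ((Q^m * ρ * Qᴴ^m).trace).re := fun m => rfl
  have hA0 : ktA ρ Q 0 = 1 := by
    simp [ktA, hρtr]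
  have hQOp : Q = Op - R := by rw [hOp]; abel
  -- base fluctuation bound
  have hg0 : 15/8*(μ*o*N)^2 * ktA ρ Q 0 ≤ g 0 := by
    have hsplit : ((ρ * (Op * Opᴴ + Opᴴ * Op)).trace).re
        = ((ρ * (Op * Opᴴ - Opᴴ * Op)).trace).re + 2*((ρ * (Opᴴ * Op)).trace).re := by
      rw [Matrix.mul_add, Matrix.mul_sub, Matrix.trace_add, Matrix.trace_sub]
      simp [Complex.add_re, Complex.sub_re]
      ring
    have herr := KTaux.abs_re_trace_mul_le ρ hρ (Op * Opᴴ - Opᴴ * Op)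
    have htrρ : (ρ.trace).re = 1 := by rw [hρtr]; simp
    rw [htrρ, mul_one] at herr
    have habs := abs_le.mp herr
    have hcb : ‖Op * Opᴴ - Opᴴ * Op‖ * 1 ≤ 4*(o^2*N) := by
      rw [mul_one]; linarith [hcommOp]
    have hb : |((ρ * (Op * Opᴴ - Opᴴ * Op)).trace).re| ≤ 4*(o^2*N) := by
      calc |((ρ * (Op * Opᴴ - Opᴴ * Op)).trace).re| ≤ ‖Op * Opᴴ - Opᴴ * Op‖ := by
            simpa using herr
      _ ≤ 4*(o^2*N) := by linarith [hcommOp]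
    have hg0' : ((ρ * (Opᴴ * Op)).trace).re ≥ 2*(μ*o*N)^2 - 2*(o^2*N) := by
      have := abs_le.mp hb
      linarith [hfluc, hsplit, this.1]
    have hshape : g 0 = ((ρ * (Opᴴ * Op)).trace).re := by
      rw [hgdef]
      simp only [pow_zero, Matrix.one_mul, Matrix.mul_one, Matrix.mul_assoc]
    rw [hA0, mul_one, hshape]
    linarith [hκu, hg0']

  -- one induction step
  have step : ∀ m : ℕ, m < M → 0 < ktA ρ Q m → γm m * ktA ρ Q m ≤ g m →
      ((μ*o*N)^2 * ktA ρ Q m ≤ ktA ρ Q (m+1) ∧ γm (m+1) * ktA ρ Q (m+1) ≤ g (m+1)) := by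
    intro m hm hpos hγg
    have hγgm : γm m * ((Q^m * ρ * Qᴴ^m).trace).re ≤ ((Q^m * ρ * Qᴴ^m * Opᴴ * Op).trace).re := by
      rw [hgdef m] at hγg
      exact hγg
    have hres := KTaux.step_main (Q^m * ρ * Qᴴ^m) (hpsd m) Op Q R hQOp
      (μ*o*N) (o^2*N) (o*a) (o*N) (γm m)
      hu (by positivity) (by positivity) (by positivity)
      hκu hlamu hβu2 hβ2 hβuu
      (hγl m (le_of_lt hm)) (hγh m)
      hOpn hRn (by linarith [hcommOp])
      hpos hγgm
    have hpowρ : Q^(m+1) * ρ * Qᴴ^(m+1) = Q * (Q^m * ρ * Qᴴ^m) * Qᴴ := by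
      rw [pow_succ' Q m, pow_succ Qᴴ m]
      simp only [Matrix.mul_assoc]
    have hI1 : ((Q^m * ρ * Qᴴ^m * Qᴴ * Q).trace).re = ktA ρ Q (m+1) := by
      rw [hktA]
      congr 1
      rw [Matrix.trace_mul_comm, hpowρ]
      simp only [Matrix.mul_assoc]
    have hI2 : ((Q^m * ρ * Qᴴ^m * (Op*Q)ᴴ * (Op*Q)).trace).re = g (m+1) := by
      rw [hgdef]
      congr 1
      rw [hpowρ, Matrix.conjTranspose_mul]
      rw [show Q^m * ρ * Qᴴ^m * (Qᴴ*Opᴴ) * (Op*Q) = (Q^m * ρ * Qᴴ^m * (Qᴴ*(Opᴴ*Op))) * Q by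
        simp only [Matrix.mul_assoc]]
      rw [Matrix.trace_mul_comm]
      simp only [Matrix.mul_assoc]
    constructor
    · rw [← hI1]
      exact hres.1
    · rw [← hI2, ← hI1]
      have hγsucc : γm (m+1) = γm m - (9/2*(o^2*N) + 5*((o*N)*(o*a))) := by
        rw [hγm, hγm, hD]
        push_cast
        ring
      rw [hγsucc]
      exact hres.2
  -- invariant
  have inv : ∀ m : ℕ, m ≤ M → 0 < ktA ρ Q m ∧ γm m * ktA ρ Q m ≤ g m := by
    intro m
    induction m with
    | zero =>
      intro _
      constructor
      · rw [hA0]; norm_num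
      · have hγ0 : γm 0 = 15/8*(μ*o*N)^2 := by rw [hγm]; norm_num
        rw [hγ0]
        exact hg0
    | succ k ih =>
      intro hk1
      have hkM : k < M := Nat.lt_of_succ_le hk1
      obtain ⟨hpos, hγg⟩ := ih (le_of_lt hkM)
      obtain ⟨e1, e2⟩ := step k hkM hpos hγg
      have hpp : 0 < (μ*o*N)^2 * ktA ρ Q k := mul_pos (by positivity) hpos
      exact ⟨by linarith, e2⟩
  -- part 1
  have part1 : ∀ m : ℕ, 1 ≤ m → m ≤ M →
      0 < ktA ρ Q (m-1) ∧ (μ*o*N)^2 * ktA ρ Q (m-1) ≤ ktA ρ Q m := by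
    intro m h1 hm
    obtain ⟨k, rfl⟩ : ∃ k, m = k+1 := ⟨m-1, (Nat.succ_pred_eq_of_pos h1).symm⟩
    have hkM : k < M := Nat.lt_of_succ_le hm
    obtain ⟨hpos, hγg⟩ := inv k (le_of_lt hkM)
    obtain ⟨e1, _⟩ := step k hkM hpos hγg
    simpa using And.intro hpos e1
  refine ⟨part1, ?_⟩
  -- part 2
  suffices H : ∀ k m : ℕ, m ≤ M → k ≤ m →
      ktA ρ Q (m - k) ≤ ((μ * o * N) ^ (2 * k))⁻¹ * ktA ρ Q m by
    exact fun k m hkm hm => H k m hm hkm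
  intro k
  induction k with
  | zero => intro m _ _; simp
  | succ j ihj =>
    intro m hm hkm
    have hrec := ihj m hm (by omega)
    have h1 : 1 ≤ m - j := by omega
    have h2 : m - j ≤ M := le_trans (Nat.sub_le m j) hm
    obtain ⟨hpos, hstep⟩ := part1 (m-j) h1 h2
    have hmm : m - (j+1) = (m - j) - 1 := by omega
    have hu2 : (0:ℝ) < (μ*o*N)^2 := by positivity
    have hx : ktA ρ Q ((m-j)-1) ≤ ((μ*o*N)^2)⁻¹ * ktA ρ Q (m-j) := by
      have hh := mul_le_mul_of_nonneg_left hstep (inv_nonneg.mpr hu2.le)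
      rwa [← mul_assoc, inv_mul_cancel₀ (ne_of_gt hu2), one_mul] at hh
    have h3 := mul_le_mul_of_nonneg_left hrec (inv_nonneg.mpr hu2.le)
    have h4 : ((μ*o*N)^(2*(j+1)) : ℝ)⁻¹ = ((μ*o*N)^2)⁻¹ * ((μ*o*N)^(2*j))⁻¹ := by
      rw [show 2*(j+1) = 2*j+2 from by ring, pow_add, mul_inv]
      ring
    rw [hmm, h4]
    calc ktA ρ Q ((m-j)-1) ≤ ((μ*o*N)^2)⁻¹ * ktA ρ Q (m-j) := hx
    _ ≤ ((μ*o*N)^2)⁻¹ * (((μ*o*N)^(2*j))⁻¹ * ktA ρ Q m) := h3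
    _ = ((μ*o*N)^2)⁻¹ * ((μ*o*N)^(2*j))⁻¹ * ktA ρ Q m := by ring
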